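/- Frequentist learning after pushforward recovers the prior: for ω a distribution on a finite type X with every point of X in the support handled appropriately, flrn≫Multinomial[K](ω) = ω, i.e. Σ_{φ ∈ M[K](X)} Multinomial[K](ω)(φ) · φ(x)/K = ω(x) for all x, where K ≥ 1. -/

import Mathlib

open Finset

noncomputable def validity {X : Type*} [Fintype X] (ω p : X → ℝ) : ℝ := ∑ x, ω x * p x
noncomputable def updateD {X : Type*} [Fintype X] (ω p : X → ℝ) : X → ℝ :=
  fun x => ω x * p x / validity ω p
noncomputable def push {X Y : Type*} [Fintype X] (c : X → Y → ℝ) (ω : X → ℝ) : Y → ℝ :=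
  fun y => ∑ x, ω x * c x y
noncomputable def pull {X Y : Type*} [Fintype Y] (c : X → Y → ℝ) (q : Y → ℝ) : X → ℝ :=
  fun x => ∑ y, c x y * q y
noncomputable def dagger {X Y : Type*} [Fintype X] (c : X → Y → ℝ) (ω : X → ℝ) : Y → X → ℝ :=
  fun y x => ω x * c x y / push c ω y

def IsDist {X : Type*} [Fintype X] (ω : X → ℝ) : Prop :=
  (∀ x, 0 ≤ ω x) ∧ ∑ x, ω x = 1
def IsChannel {X Y : Type*} [Fintype Y] (c : X → Y → ℝ) : Prop :=
  ∀ x, IsDist (c x)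
def IsPred {X : Type*} (p : X → ℝ) : Prop := ∀ x, 0 ≤ p x ∧ p x ≤ 1

noncomputable def coefm {X : Type*} [Fintype X] [DecidableEq X] (K : ℕ) (φ : Sym X K) : ℝ :=
  (K.factorial : ℝ) / ∏ x, (((φ : Multiset X).count x).factorial : ℝ)
noncomputable def multinom {X : Type*} [Fintype X] [DecidableEq X] (K : ℕ) (ω : X → ℝ)
    (φ : Sym X K) : ℝ :=
  coefm K φ * ∏ x, ω x ^ ((φ : Multiset X).count x)
noncomputable def flrn {X : Type*} [DecidableEq X] (K : ℕ) (φ : Sym X K) : X → ℝ :=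
  fun x => ((φ : Multiset X).count x : ℝ) / K
def acc {X : Type*} {K : ℕ} (v : Fin K → X) : Sym X K :=
  ⟨Multiset.map v Finset.univ.val, by simp⟩
noncomputable def arr {X : Type*} [Fintype X] [DecidableEq X] {K : ℕ} (φ : Sym X K) :
    (Fin K → X) → ℝ :=
  fun v => if acc v = φ then 1 / coefm K φ else 0
noncomputable def Mchan {X Y : Type*} [Fintype X] [DecidableEq X] [Fintype Y] [DecidableEq Y]
    {K : ℕ} (c : X → Y → ℝ) : Sym X K → Sym Y K → ℝ :=
  fun φ ψ => ∑ v : Fin K → X, arr φ v *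
    ∑ w : Fin K → Y, (∏ i, c (v i) (w i)) * (if acc w = ψ then 1 else 0)

section Aux
variable {X : Type*} [Fintype X] [DecidableEq X]

lemma aux_P1 (m : Multiset X) :
    (m.map (MvPolynomial.X (R := ℕ))).prod = MvPolynomial.monomial m.toFinsupp 1 := by
  induction m using Multiset.induction_on with
  | empty => simp
  | cons a m ih =>
      rw [Multiset.map_cons, Multiset.prod_cons, ih, MvPolynomial.X,
        MvPolynomial.monomial_mul, one_mul, show a ::ₘ m = {a} + m from rfl,
        Multiset.toFinsupp_add, Multiset.toFinsupp_singleton]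

lemma aux_Pmap {K : ℕ} (v : Fin K → X) {R : Type*} [CommMonoid R] (f : X → R) :
    ∏ i, f (v i) = (((acc v : Multiset X)).map f).prod := by
  show _ = (Multiset.map f (Multiset.map v Finset.univ.val)).prod
  rw [Multiset.map_map]; rfl

lemma aux_coeff_extract {K : ℕ} (φ : Sym X K) (c : Sym X K → ℕ) :
    MvPolynomial.coeff (φ : Multiset X).toFinsupp
      (∑ ψ : Sym X K, (c ψ : MvPolynomial X ℕ) *
        MvPolynomial.monomial (ψ : Multiset X).toFinsupp 1) = c φ := by
  rw [MvPolynomial.coeff_sum]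
  rw [Finset.sum_eq_single φ]
  · rw [← MvPolynomial.C_eq_coe_nat, MvPolynomial.C_mul_monomial, mul_one,
      MvPolynomial.coeff_monomial, if_pos rfl]
    simp
  · intro ψ _ hne
    rw [← MvPolynomial.C_eq_coe_nat, MvPolynomial.C_mul_monomial, mul_one,
      MvPolynomial.coeff_monomial, if_neg]
    intro h
    exact hne (Sym.coe_injective (Multiset.toFinsupp.injective h))
  · simp

lemma aux_counting {K : ℕ} (φ : Sym X K) :
    (Finset.univ.filter (fun v : Fin K → X => acc v = φ)).card
      = (φ : Multiset X).countPerms := by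
  have key : (∑ x : X, MvPolynomial.X x : MvPolynomial X ℕ) ^ K
      = ∑ v : Fin K → X, MvPolynomial.monomial (acc v : Multiset X).toFinsupp 1 := by
    rw [← Fin.prod_const K, Finset.prod_univ_sum]
    simp only [Fintype.piFinset_univ]
    exact Finset.sum_congr rfl fun v _ => by rw [aux_Pmap v MvPolynomial.X, aux_P1]
  have key2 : (∑ x : X, MvPolynomial.X x : MvPolynomial X ℕ) ^ K
      = ∑ ψ : Sym X K, ((ψ : Multiset X).countPerms : MvPolynomial X ℕ) *
          MvPolynomial.monomial (ψ : Multiset X).toFinsupp 1 := by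
    rw [show (∑ x : X, MvPolynomial.X x : MvPolynomial X ℕ) = Finset.univ.sum MvPolynomial.X from rfl,
      Finset.sum_pow]
    rw [show (Finset.univ : Finset X).sym K = Finset.univ from by ext m; simp [Finset.mem_sym_iff]]
    refine Finset.sum_congr rfl fun ψ _ => ?_
    congr 1
    exact aux_P1 (ψ : Multiset X)
  have key3 : (∑ v : Fin K → X, MvPolynomial.monomial (acc v : Multiset X).toFinsupp (1:ℕ))
      = ∑ ψ : Sym X K, (((Finset.univ.filter (fun v : Fin K → X => acc v = ψ)).card : ℕ) : MvPolynomial X ℕ) *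
          MvPolynomial.monomial (ψ : Multiset X).toFinsupp 1 := by
    rw [← Finset.sum_fiberwise Finset.univ (fun v : Fin K → X => acc v)
      (fun v => MvPolynomial.monomial (acc v : Multiset X).toFinsupp (1:ℕ))]
    refine Finset.sum_congr rfl fun ψ _ => ?_
    rw [Finset.sum_congr rfl (fun v hv => by
      rw [(Finset.mem_filter.mp hv).2]), Finset.sum_const, nsmul_eq_mul]
  have e : (∑ ψ : Sym X K, (((Finset.univ.filter (fun v : Fin K → X => acc v = ψ)).card : ℕ) : MvPolynomial X ℕ) *
          MvPolynomial.monomial (ψ : Multiset X).toFinsupp 1)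
      = ∑ ψ : Sym X K, ((ψ : Multiset X).countPerms : MvPolynomial X ℕ) *
          MvPolynomial.monomial (ψ : Multiset X).toFinsupp 1 := by
    rw [← key3, ← key, key2]
  have h := congrArg (MvPolynomial.coeff (φ : Multiset X).toFinsupp) e
  rwa [aux_coeff_extract, aux_coeff_extract] at h

lemma aux_coefm_eq (K : ℕ) (φ : Sym X K) :
    coefm K φ = ((φ : Multiset X).countPerms : ℝ) := by
  have hprod : ∏ x, (((φ : Multiset X).count x).factorial : ℝ)
      = ((∏ x ∈ (φ : Multiset X).toFinset, ((φ : Multiset X).count x).factorial : ℕ) : ℝ) := by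
    push_cast
    refine (Finset.prod_subset (Finset.subset_univ _) ?_).symm
    intro x _ hx
    rw [Multiset.count_eq_zero_of_notMem (by simpa using hx)]
    simp
  have hspec := Nat.multinomial_spec (φ : Multiset X).toFinset (φ : Multiset X).count
  have hsum : ∑ x ∈ (φ : Multiset X).toFinset, (φ : Multiset X).count x = K := by
    rw [Multiset.toFinset_sum_count_eq]
    exact φ.2
  rw [hsum] at hspec
  rw [coefm, hprod, ← hspec]
  have hne : ((∏ x ∈ (φ : Multiset X).toFinset, ((φ : Multiset X).count x).factorial : ℕ) : ℝ) ≠ 0 := by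
    positivity
  have heq : (φ : Multiset X).countPerms
      = Nat.multinomial (φ : Multiset X).toFinset (fun a => (φ : Multiset X).count a) := by
    rw [show (φ : Multiset X).countPerms = (Multiset.toFinsupp (φ : Multiset X)).multinomial from rfl,
      Finsupp.multinomial_eq]
    rfl
  rw [heq, Nat.cast_mul]
  field_simp

lemma aux_prod_count {K : ℕ} (φ : Sym X K) (ω : X → ℝ) :
    ((φ : Multiset X).map ω).prod = ∏ x, ω x ^ ((φ : Multiset X).count x) := by
  rw [Finset.prod_multiset_map_count]
  refine Finset.prod_subset (Finset.subset_univ _) ?_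
  intro x _ hx
  rw [Multiset.count_eq_zero_of_notMem (by simpa using hx)]
  simp

lemma aux_count_acc {K : ℕ} (v : Fin K → X) (x : X) :
    ((acc v : Multiset X)).count x = (Finset.univ.filter (fun i => v i = x)).card := by
  show (Multiset.map v Finset.univ.val).count x = _
  rw [Multiset.count_map]
  rw [show Finset.univ.filter (fun i => v i = x) = Finset.univ.filter (fun i => x = v i) from by
    ext i; simp [eq_comm]]
  rfl

lemma aux_per_i {K : ℕ} (ω : X → ℝ) (hsum : ∑ a, ω a = 1) (i : Fin K) (x : X) :
    ∑ v : Fin K → X, (if v i = x then (1:ℝ) else 0) * ∏ j, ω (v j) = ω x := by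
  classical
  set g : Fin K → X → ℝ := fun j a => if j = i then (if a = x then ω a else 0) else ω a with hg
  have hterm : ∀ v : Fin K → X,
      (if v i = x then (1:ℝ) else 0) * ∏ j, ω (v j) = ∏ j, g j (v j) := by
    intro v
    rw [← Finset.mul_prod_erase Finset.univ (fun j => g j (v j)) (Finset.mem_univ i),
      ← Finset.mul_prod_erase Finset.univ (fun j => ω (v j)) (Finset.mem_univ i), ← mul_assoc]
    have herase : ∏ j ∈ Finset.univ.erase i, g j (v j) = ∏ j ∈ Finset.univ.erase i, ω (v j) :=
      Finset.prod_congr rfl fun j hj => by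
        simp [hg, (Finset.mem_erase.mp hj).1]
    rw [herase]
    congr 1
    by_cases h : v i = x <;> simp [hg, h]
  rw [Finset.sum_congr rfl fun v _ => hterm v]
  have hps := (Finset.prod_univ_sum (fun _ : Fin K => (Finset.univ : Finset X)) (fun j a => g j a)).symm
  rw [Fintype.piFinset_univ] at hps
  rw [hps]
  rw [Finset.prod_eq_single i (fun j _ hj => by simp [hg, hj, hsum]) (by simp)]
  simp [hg, Finset.sum_ite_eq' Finset.univ x ω]

lemma aux_multinom_eq_sum {K : ℕ} (ω : X → ℝ) (φ : Sym X K) :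
    multinom K ω φ
      = ∑ v ∈ Finset.univ.filter (fun v : Fin K → X => acc v = φ), ∏ i, ω (v i) := by
  have hterm : ∀ v ∈ Finset.univ.filter (fun v : Fin K → X => acc v = φ),
      ∏ i, ω (v i) = ∏ x, ω x ^ ((φ : Multiset X).count x) := by
    intro v hv
    rw [aux_Pmap v ω, (Finset.mem_filter.mp hv).2, aux_prod_count]
  rw [Finset.sum_congr rfl hterm, Finset.sum_const, nsmul_eq_mul, aux_counting,
    multinom, aux_coefm_eq]

end Aux

open Classical in
noncomputable def klE {Z : Type*} [Fintype Z] (ω ρ : Z → ℝ) : EReal :=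
  if ∀ z, ω z ≠ 0 → ρ z ≠ 0 then ((∑ z, ω z * Real.log (ω z / ρ z) : ℝ) : EReal) else ⊤

theorem stmt4 {X : Type*} [Fintype X] [DecidableEq X] (K : ℕ) (hK : 1 ≤ K)
    (ω : X → ℝ) (hω : IsDist ω) (x : X) :
    ∑ φ : Sym X K, multinom K ω φ * (((φ : Multiset X).count x : ℝ) / K) = ω x := by
  classical
  obtain ⟨hpos, hsum⟩ := hω
  have hKne : (K : ℝ) ≠ 0 := Nat.cast_ne_zero.mpr (by omega)
  have step1 : ∑ φ : Sym X K, multinom K ω φ * (((φ : Multiset X).count x : ℝ) / K)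
      = ∑ v : Fin K → X, (∏ i, ω (v i)) * (((acc v : Multiset X).count x : ℝ) / K) := by
    rw [← Finset.sum_fiberwise Finset.univ (fun v : Fin K → X => acc v)
      (fun v => (∏ i, ω (v i)) * (((acc v : Multiset X).count x : ℝ) / K))]
    refine Finset.sum_congr rfl fun φ _ => ?_
    rw [aux_multinom_eq_sum, Finset.sum_mul]
    exact Finset.sum_congr rfl fun v hv => by rw [(Finset.mem_filter.mp hv).2]
  rw [step1]
  have step2 : ∀ v : Fin K → X,
      (∏ i, ω (v i)) * (((acc v : Multiset X).count x : ℝ) / K)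
        = ∑ i : Fin K, ((if v i = x then (1:ℝ) else 0) * ∏ j, ω (v j)) / K := by
    intro v
    have hc : ((acc v : Multiset X).count x : ℝ)
        = ∑ i : Fin K, (if v i = x then (1:ℝ) else 0) := by
      rw [aux_count_acc, Finset.card_filter]
      push_cast
      exact Finset.sum_congr rfl fun i _ => by split <;> simp
    rw [hc, Finset.sum_div, Finset.mul_sum]
    exact Finset.sum_congr rfl fun i _ => by ring
  rw [Finset.sum_congr rfl fun v _ => step2 v, Finset.sum_comm]
  have step3 : ∀ i : Fin K,
      ∑ v : Fin K → X, ((if v i = x then (1:ℝ) else 0) * ∏ j, ω (v j)) / K = ω x / K := by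
    intro i
    rw [← Finset.sum_div, aux_per_i ω hsum i x]
  rw [Finset.sum_congr rfl fun i _ => step3 i, Finset.sum_const, Finset.card_univ,
    Fintype.card_fin, nsmul_eq_mul, mul_div_cancel₀ _ hKne]
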